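/- (Graf's bound ingredient) There exists a constant $C < \infty$ depending only on $s \in (0,1)$ and on the bounded compactly supported probability density $\rho$ such that $|\mathrm{Im}\,w| \cdot |w|^s \int_{\mathbb{R}} \frac{\rho(x+\alpha)}{|\alpha + w|^2}\,d\alpha \le C$ for all $w \in \mathbb{C}$ and all $x \in \mathrm{supp}\,\rho$. -/

import Mathlib

open MeasureTheory Real

/-- Poisson kernel integrability. -/
lemma pois_integrable (a b : ℝ) (hb : 0 < b) :
    Integrable (fun α : ℝ => ((α + a) ^ 2 + b ^ 2)⁻¹) := by
  have h1 : Integrable (fun t : ℝ => (1 + (t / b) ^ 2)⁻¹) :=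
    integrable_inv_one_add_sq.comp_div hb.ne'
  have h2 : Integrable (fun t : ℝ => b⁻¹ * b⁻¹ * (1 + (t / b) ^ 2)⁻¹) := h1.const_mul _
  have h3 : (fun t : ℝ => b⁻¹ * b⁻¹ * (1 + (t / b) ^ 2)⁻¹)
      = fun t : ℝ => (t ^ 2 + b ^ 2)⁻¹ := by
    funext t
    rw [← mul_inv, ← mul_inv]
    congr 1
    field_simp
    ring
  rw [h3] at h2
  exact h2.comp_add_right a

/-- Poisson kernel integral. -/
lemma pois_integral (a b : ℝ) (hb : 0 < b) :
    ∫ α : ℝ, ((α + a) ^ 2 + b ^ 2)⁻¹ = π / b := by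
  have h0 : ∫ α : ℝ, ((α + a) ^ 2 + b ^ 2)⁻¹ = ∫ t : ℝ, (t ^ 2 + b ^ 2)⁻¹ :=
    integral_add_right_eq_self (fun t : ℝ => (t ^ 2 + b ^ 2)⁻¹) a
  have h3 : (fun t : ℝ => (t ^ 2 + b ^ 2)⁻¹)
      = fun t : ℝ => b⁻¹ * b⁻¹ * (1 + (t / b) ^ 2)⁻¹ := by
    funext t
    rw [← mul_inv, ← mul_inv]
    congr 1
    field_simp
    ring
  have h4 : ∫ t : ℝ, (1 + (t / b) ^ 2)⁻¹ = |b| • ∫ t : ℝ, (1 + t ^ 2)⁻¹ :=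
    MeasureTheory.Measure.integral_comp_div (fun t : ℝ => (1 + t ^ 2)⁻¹) b
  rw [h0, h3, integral_const_mul, h4, integral_univ_inv_one_add_sq,
    abs_of_pos hb, smul_eq_mul]
  field_simp

/-- Graf's bound ingredient (Lemma 5.3):
`|Im w| |w|^s ∫ ρ(x+α)/|α+w|² dα ≤ C` uniformly in `w ∈ ℂ` and `x ∈ supp ρ`. -/
theorem stmt_18 (s : ℝ) (hs : s ∈ Set.Ioo (0 : ℝ) 1) (ρ : ℝ → ℝ) (hmeas : Measurable ρ)
    (hnn : ∀ x, 0 ≤ ρ x) (hbd : ∃ M, ∀ x, ρ x ≤ M) (hcs : HasCompactSupport ρ)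
    (hprob : ∫ x, ρ x = 1) :
    ∃ C : ℝ, ∀ (w : ℂ) (x : ℝ), x ∈ tsupport ρ →
      |w.im| * ‖w‖ ^ s *
        ∫ α : ℝ, ρ (x + α) / ‖(α : ℂ) + w‖ ^ 2 ≤ C := by
  obtain ⟨M, hM⟩ := hbd
  have hM0 : 0 ≤ M := le_trans (hnn 0) (hM 0)
  -- radius of the support
  obtain ⟨R0, hR0⟩ := hcs.isBounded.subset_closedBall 0
  set R : ℝ := max R0 1 with hRdef
  have hR1 : (1 : ℝ) ≤ R := le_max_right _ _
  have hR : 0 < R := lt_of_lt_of_le one_pos hR1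
  have hsupp : ∀ y ∈ tsupport ρ, |y| ≤ R := by
    intro y hy
    have := hR0 hy
    simp only [Metric.mem_closedBall, Real.dist_eq, sub_zero] at this
    exact this.trans (le_max_left _ _)
  -- ρ is integrable
  have hρint : Integrable ρ := by
    refine Integrable.mono' (g := fun x => Set.indicator (tsupport ρ) (fun _ => M) x)
      ?_ hmeas.aestronglyMeasurable ?_
    · exact (integrable_indicator_iff (isClosed_tsupport ρ).measurableSet).2
        (integrableOn_const hcs.measure_lt_top.ne)
    · filter_upwards with y
      rw [Real.norm_eq_abs, abs_of_nonneg (hnn y)]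
      by_cases hy : y ∈ tsupport ρ
      · simpa [Set.indicator_of_mem hy] using hM y
      · have : ρ y = 0 := image_eq_zero_of_notMem_tsupport hy
        simp [Set.indicator_of_notMem hy, this]
  refine ⟨max (M * π * (4 * R) ^ s) 4, ?_⟩
  intro w x hx
  set b : ℝ := |w.im| with hbdef
  set A : ℝ := ‖w‖ with hAdef
  set I : ℝ := ∫ α : ℝ, ρ (x + α) / ‖(α : ℂ) + w‖ ^ 2 with hIdef
  have hInn : 0 ≤ I := by
    apply integral_nonneg
    intro α
    have := hnn (x + α)
    positivity
  have hbnn : 0 ≤ b := abs_nonneg _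
  have hAnn : 0 ≤ A := norm_nonneg w
  have hbA : b ≤ A := Complex.abs_im_le_norm w
  have habs2 : ∀ α : ℝ, (‖(α : ℂ) + w‖) ^ 2 = (α + w.re) ^ 2 + b ^ 2 := by
    intro α
    rw [Complex.sq_norm, Complex.normSq_apply]
    simp [hbdef, sq_abs, pow_two]
  by_cases hlarge : 4 * R ≤ A
  · -- large |w| regime
    have hw1 : (1 : ℝ) ≤ A := le_trans (by linarith) hlarge
    have hden : 0 < A - 2 * R := by linarith
    -- pointwise bound
    have hpt : ∀ α : ℝ, ρ (x + α) / ‖(α : ℂ) + w‖ ^ 2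
        ≤ ρ (x + α) * ((A - 2 * R) ^ 2)⁻¹ := by
      intro α
      by_cases hzero : ρ (x + α) = 0
      · simp [hzero]
      · have hxα : x + α ∈ tsupport ρ :=
          subset_closure (by simpa [Function.mem_support] using hzero)
        have hαbd : |α| ≤ 2 * R := by
          have h1 := hsupp _ hx
          have h2 := hsupp _ hxα
          calc |α| = |(x + α) - x| := by ring_nf
            _ ≤ |x + α| + |x| := abs_sub _ _
            _ ≤ 2 * R := by linarith
        have hlow : A - 2 * R ≤ ‖(α : ℂ) + w‖ := by
          have h1 : A ≤ ‖(α : ℂ) + w‖ + |α| := by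
            have := norm_add_le ((α : ℂ) + w) (-(α : ℂ))
            simpa [Complex.norm_real, Real.norm_eq_abs, add_comm] using this
          linarith
        have hsq : (A - 2 * R) ^ 2 ≤ ‖(α : ℂ) + w‖ ^ 2 :=
          pow_le_pow_left₀ hden.le hlow 2
        rw [div_eq_mul_inv]
        exact mul_le_mul_of_nonneg_left
          ((inv_anti₀ (by positivity) hsq)) (hnn _)
    have hInt2 : Integrable (fun α : ℝ => ρ (x + α) * ((A - 2 * R) ^ 2)⁻¹) :=
      (hρint.comp_add_left x).mul_const _
    have hIle : I ≤ ((A - 2 * R) ^ 2)⁻¹ := by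
      have := integral_mono_of_nonneg
        (f := fun α : ℝ => ρ (x + α) / ‖(α : ℂ) + w‖ ^ 2)
        (g := fun α : ℝ => ρ (x + α) * ((A - 2 * R) ^ 2)⁻¹)
        (Filter.Eventually.of_forall fun α => by
          have := hnn (x + α); positivity)
        hInt2 (Filter.Eventually.of_forall hpt)
      rw [integral_mul_const, integral_add_left_eq_self, hprob, one_mul] at this
      exact this
    have hhalf : A / 2 ≤ A - 2 * R := by linarith
    have hIle2 : I ≤ 4 / A ^ 2 := by
      have h1 : (A / 2) ^ 2 ≤ (A - 2 * R) ^ 2 := pow_le_pow_left₀ (by positivity) hhalf 2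
      have h2 : ((A - 2 * R) ^ 2)⁻¹ ≤ ((A / 2) ^ 2)⁻¹ := inv_anti₀ (by positivity) h1
      refine hIle.trans (h2.trans ?_)
      rw [div_pow, inv_div]
      norm_num
    have hAs : A ^ s ≤ A := by
      calc A ^ s ≤ A ^ (1 : ℝ) := Real.rpow_le_rpow_of_exponent_le hw1 hs.2.le
        _ = A := Real.rpow_one A
    calc b * A ^ s * I ≤ A * A * (4 / A ^ 2) := by
          have hAs0 : 0 ≤ A ^ s := Real.rpow_nonneg hAnn s
          gcongr
        _ = 4 := by field_simp
        _ ≤ max (M * π * (4 * R) ^ s) 4 := le_max_right _ _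
  · -- small |w| regime
    push_neg at hlarge
    rcases eq_or_lt_of_le hbnn with hb0 | hb
    · rw [← hb0, zero_mul, zero_mul]
      exact le_trans (by norm_num) (le_max_right (M * π * (4 * R) ^ s) 4)
    · -- Poisson bound
      have hpt : ∀ α : ℝ, ρ (x + α) / ‖(α : ℂ) + w‖ ^ 2
          ≤ M * ((α + w.re) ^ 2 + b ^ 2)⁻¹ := by
        intro α
        rw [habs2 α, div_eq_mul_inv]
        exact mul_le_mul_of_nonneg_right (hM _) (by positivity)
      have hIle : I ≤ M * (π / b) := by
        have := integral_mono_of_nonneg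
          (f := fun α : ℝ => ρ (x + α) / ‖(α : ℂ) + w‖ ^ 2)
          (g := fun α : ℝ => M * ((α + w.re) ^ 2 + b ^ 2)⁻¹)
          (Filter.Eventually.of_forall fun α => by
            have := hnn (x + α); positivity)
          ((pois_integrable w.re b hb).const_mul M)
          (Filter.Eventually.of_forall hpt)
        rwa [integral_const_mul, pois_integral w.re b hb] at this
      have hAs : A ^ s ≤ (4 * R) ^ s :=
        Real.rpow_le_rpow hAnn hlarge.le hs.1.le
      calc b * A ^ s * I ≤ b * ((4 * R) ^ s * (M * (π / b))) := by
            rw [mul_assoc]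
            refine mul_le_mul_of_nonneg_left ?_ hbnn
            have hAs0 : 0 ≤ A ^ s := Real.rpow_nonneg hAnn s
            have : 0 ≤ (4 * R) ^ s := Real.rpow_nonneg (by positivity) s
            exact mul_le_mul hAs hIle hInn this
          _ = M * π * (4 * R) ^ s := by field_simp
          _ ≤ max (M * π * (4 * R) ^ s) 4 := le_max_left _ _
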